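/- Let 0 < a_1 < a_2 < a_3 < a_4 < 1 with a_1+a_2+a_3+a_4 = 1. Then for every α ∈ (−log_4 a_4, −log_4 a_1) there exist ã_1, ã_2, ã_3, ã_4 ∈ (0,1) such that ã_1+ã_2+ã_3+ã_4 = 1, −Σ_{i=1}^4 ã_i log_4 a_i = α, and log(ã_2/ã_1)/log(a_2/a_1) = log(ã_3/ã_1)/log(a_3/a_1) = log(ã_4/ã_1)/log(a_4/a_1). -/

import Mathlib

open MeasureTheory Metric Filter Set ENNReal

/-- Lemma 12 of the paper: for `0 < a_1 < a_2 < a_3 < a_4 < 1` summing to `1` and any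
`α ∈ (-log_4 a_4, -log_4 a_1)` there are weights `ã_i ∈ (0,1)` summing to `1` with
`-Σ ã_i log_4 a_i = α` and `log(ã_i/ã_1)/log(a_i/a_1)` independent of `i = 2,3,4`. -/
theorem exists_auxiliary_weights (a : Fin 4 → ℝ) (hmono : StrictMono a)
    (h0 : 0 < a 0) (h1 : a 3 < 1) (hsum : ∑ i, a i = 1)
    (α : ℝ) (hα : α ∈ Set.Ioo (-Real.logb 4 (a 3)) (-Real.logb 4 (a 0))) :
    ∃ ta : Fin 4 → ℝ,
      (∀ i, ta i ∈ Set.Ioo (0 : ℝ) 1) ∧ ∑ i, ta i = 1 ∧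
      -(∑ i, ta i * Real.logb 4 (a i)) = α ∧
      Real.log (ta 1 / ta 0) / Real.log (a 1 / a 0)
        = Real.log (ta 2 / ta 0) / Real.log (a 2 / a 0) ∧
      Real.log (ta 2 / ta 0) / Real.log (a 2 / a 0)
        = Real.log (ta 3 / ta 0) / Real.log (a 3 / a 0) := by
  obtain ⟨hα1, hα2⟩ := hα
  have hpos : ∀ i, 0 < a i := fun i => lt_of_lt_of_le h0 (hmono.monotone (Fin.zero_le i))
  set L : Fin 4 → ℝ := fun i => Real.logb 4 (a i) with hL
  set g : ℝ → ℝ := fun s => ∑ i, a i ^ s with hg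
  set f : ℝ → ℝ := fun s => ∑ i, a i ^ s * L i with hf
  have hgpos : ∀ s, 0 < g s := fun s =>
    Finset.sum_pos (fun i _ => Real.rpow_pos_of_pos (hpos i) s) Finset.univ_nonempty
  set F : ℝ → ℝ := fun s => -(f s / g s) with hF
  have hcont_pow : ∀ i : Fin 4, Continuous fun s : ℝ => a i ^ s := fun i =>
    continuous_iff_continuousAt.mpr fun s => Real.continuousAt_const_rpow (hpos i).ne'
  have hcontF : Continuous F := by
    apply Continuous.neg
    exact ((continuous_finset_sum _ fun i _ => (hcont_pow i).mul continuous_const).div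
      (continuous_finset_sum _ fun i _ => hcont_pow i) fun s => (hgpos s).ne')
  have hratio : ∀ (j i : Fin 4) (s : ℝ), (a i / a j) ^ s = a i ^ s / a j ^ s := fun j i s =>
    Real.div_rpow (hpos i).le (hpos j).le s
  have key : ∀ (j : Fin 4) (s : ℝ),
      F s = -((∑ i, (a i / a j) ^ s * L i) / (∑ i, (a i / a j) ^ s)) := by
    intro j s
    have hj : (a j : ℝ) ^ s ≠ 0 := (Real.rpow_pos_of_pos (hpos j) s).ne'
    have hgne : g s ≠ 0 := (hgpos s).ne'
    have e1 : ∑ i, (a i / a j) ^ s * L i = f s / a j ^ s := by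
      simp only [hf, Finset.sum_div]
      exact Finset.sum_congr rfl fun i _ => by rw [hratio, div_mul_eq_mul_div]
    have e2 : ∑ i, (a i / a j) ^ s = g s / a j ^ s := by
      simp only [hg, Finset.sum_div]
      exact Finset.sum_congr rfl fun i _ => hratio j i s
    rw [e1, e2, hF]
    congr 1
    field_simp

  have hone : ∀ (j : Fin 4) (l : Filter ℝ),
      Tendsto (fun s : ℝ => (a j / a j) ^ s) l (nhds 1) := by
    intro j l
    rw [div_self (hpos j).ne']
    exact tendsto_const_nhds.congr fun s => (Real.one_rpow s).symm
  have hFtop : Tendsto F atTop (nhds (-(L 3))) := by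
    simp only [funext (key 3)]
    have hzero : ∀ i : Fin 4, i ≠ 3 → Tendsto (fun s : ℝ => (a i / a 3) ^ s) atTop (nhds 0) := by
      intro i hi
      apply _root_.tendsto_rpow_atTop_of_base_lt_one
      · have := div_pos (hpos i) (hpos 3); linarith
      · rw [div_lt_one (hpos 3)]
        exact hmono (lt_of_le_of_ne (Fin.le_last i) (by simpa using hi))
    have hnum : Tendsto (fun s : ℝ => ∑ i, (a i / a 3) ^ s * L i) atTop (nhds (L 3)) := by
      have : Tendsto (fun s : ℝ => ∑ i, (a i / a 3) ^ s * L i) atTop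
          (nhds (0 * L 0 + 0 * L 1 + 0 * L 2 + 1 * L 3)) := by
        simp only [Fin.sum_univ_four]
        exact ((((hzero 0 (by decide)).mul tendsto_const_nhds).add
          ((hzero 1 (by decide)).mul tendsto_const_nhds)).add
          ((hzero 2 (by decide)).mul tendsto_const_nhds)).add
          ((hone 3 atTop).mul tendsto_const_nhds)
      simpa using this
    have hden : Tendsto (fun s : ℝ => ∑ i, (a i / a 3) ^ s) atTop (nhds 1) := by
      have : Tendsto (fun s : ℝ => ∑ i, (a i / a 3) ^ s) atTop (nhds (0 + 0 + 0 + 1)) := by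
        simp only [Fin.sum_univ_four]
        exact (((hzero 0 (by decide)).add (hzero 1 (by decide))).add
          (hzero 2 (by decide))).add (hone 3 atTop)
      simpa using this
    simpa using (hnum.div hden one_ne_zero).neg
  have hFbot : Tendsto F atBot (nhds (-(L 0))) := by
    simp only [funext (key 0)]
    have hzero : ∀ i : Fin 4, i ≠ 0 → Tendsto (fun s : ℝ => (a i / a 0) ^ s) atBot (nhds 0) := by
      intro i hi
      apply tendsto_rpow_atBot_of_base_gt_one
      rw [lt_div_iff₀ (hpos 0), one_mul]
      exact hmono (lt_of_le_of_ne (Fin.zero_le i) (Ne.symm hi))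
    have hnum : Tendsto (fun s : ℝ => ∑ i, (a i / a 0) ^ s * L i) atBot (nhds (L 0)) := by
      have : Tendsto (fun s : ℝ => ∑ i, (a i / a 0) ^ s * L i) atBot
          (nhds (1 * L 0 + 0 * L 1 + 0 * L 2 + 0 * L 3)) := by
        simp only [Fin.sum_univ_four]
        exact ((((hone 0 atBot).mul tendsto_const_nhds).add
          ((hzero 1 (by decide)).mul tendsto_const_nhds)).add
          ((hzero 2 (by decide)).mul tendsto_const_nhds)).add
          ((hzero 3 (by decide)).mul tendsto_const_nhds)
      simpa using this
    have hden : Tendsto (fun s : ℝ => ∑ i, (a i / a 0) ^ s) atBot (nhds 1) := by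
      have : Tendsto (fun s : ℝ => ∑ i, (a i / a 0) ^ s) atBot (nhds (1 + 0 + 0 + 0)) := by
        simp only [Fin.sum_univ_four]
        exact (((hone 0 atBot).add (hzero 1 (by decide))).add
          (hzero 2 (by decide))).add (hzero 3 (by decide))
      simpa using this
    simpa using (hnum.div hden one_ne_zero).neg
  obtain ⟨s₂, hs₂⟩ := (hFtop.eventually_lt_const hα1).exists
  obtain ⟨s₁, hs₁, hs₁₂⟩ := ((hFbot.eventually_const_lt hα2).and (eventually_le_atBot s₂)).exists
  obtain ⟨s, -, hFs⟩ := intermediate_value_Icc' hs₁₂ hcontF.continuousOn ⟨hs₂.le, hs₁.le⟩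
  -- construct the weights
  refine ⟨fun i => a i ^ s / g s, ?_, ?_, ?_, ?_, ?_⟩
  · intro i
    have hi : 0 < a i ^ s := Real.rpow_pos_of_pos (hpos i) s
    constructor
    · exact div_pos hi (hgpos s)
    · rw [div_lt_one (hgpos s)]
      rcases eq_or_ne i 0 with rfl | hne
      · exact Finset.single_lt_sum (by decide : (1 : Fin 4) ≠ 0) (Finset.mem_univ _)
          (Finset.mem_univ _) (Real.rpow_pos_of_pos (hpos 1) s)
          fun k _ _ => (Real.rpow_pos_of_pos (hpos k) s).le
      · exact Finset.single_lt_sum (Ne.symm (by simpa using hne) : (0 : Fin 4) ≠ i)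
          (Finset.mem_univ _) (Finset.mem_univ _) (Real.rpow_pos_of_pos (hpos 0) s)
          fun k _ _ => (Real.rpow_pos_of_pos (hpos k) s).le
  · rw [← Finset.sum_div]
    exact div_self (hgpos s).ne'
  · have : ∑ i, a i ^ s / g s * Real.logb 4 (a i) = f s / g s := by
      rw [hf, Finset.sum_div]
      exact Finset.sum_congr rfl fun i _ => by rw [div_mul_eq_mul_div]
    rw [this]
    exact hFs
  · have hr : ∀ i : Fin 4, a i ^ s / g s / (a 0 ^ s / g s) = (a i / a 0) ^ s := by
      intro i
      rw [hratio]
      have h0s : (a 0:ℝ) ^ s ≠ 0 := (Real.rpow_pos_of_pos (hpos 0) s).ne'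
      have hgs : g s ≠ 0 := (hgpos s).ne'
      field_simp
    have hlog : ∀ i : Fin 4, Real.log ((a i / a 0) ^ s) = s * Real.log (a i / a 0) := by
      intro i
      exact Real.log_rpow (div_pos (hpos i) (hpos 0)) s
    have hne : ∀ i : Fin 4, i ≠ 0 → Real.log (a i / a 0) ≠ 0 := by
      intro i hi
      have : 1 < a i / a 0 := by
        rw [lt_div_iff₀ (hpos 0), one_mul]
        exact hmono (lt_of_le_of_ne (Fin.zero_le i) (Ne.symm hi))
      exact (Real.log_pos this).ne'
    rw [hr 1, hr 2, hlog 1, hlog 2, mul_div_assoc, mul_div_assoc,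
      div_self (hne 1 (by decide)), div_self (hne 2 (by decide))]
  · have hr : ∀ i : Fin 4, a i ^ s / g s / (a 0 ^ s / g s) = (a i / a 0) ^ s := by
      intro i
      rw [hratio]
      have h0s : (a 0:ℝ) ^ s ≠ 0 := (Real.rpow_pos_of_pos (hpos 0) s).ne'
      have hgs : g s ≠ 0 := (hgpos s).ne'
      field_simp
    have hlog : ∀ i : Fin 4, Real.log ((a i / a 0) ^ s) = s * Real.log (a i / a 0) := by
      intro i
      exact Real.log_rpow (div_pos (hpos i) (hpos 0)) s
    have hne : ∀ i : Fin 4, i ≠ 0 → Real.log (a i / a 0) ≠ 0 := by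
      intro i hi
      have : 1 < a i / a 0 := by
        rw [lt_div_iff₀ (hpos 0), one_mul]
        exact hmono (lt_of_le_of_ne (Fin.zero_le i) (Ne.symm hi))
      exact (Real.log_pos this).ne'
    rw [hr 2, hr 3, hlog 2, hlog 3, mul_div_assoc, mul_div_assoc,
      div_self (hne 2 (by decide)), div_self (hne 3 (by decide))]
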